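/- For all a, b ≥ κ > 0: a(log(a/b))² ≤ (a−b)²/κ + |a−b|³/κ². -/

import Mathlib

theorem pointwise_log_sq_bound (κ a b : ℝ) (hκ : 0 < κ) (ha : κ ≤ a) (hb : κ ≤ b) :
    a * (Real.log (a / b)) ^ 2 ≤ (a - b) ^ 2 / κ + |a - b| ^ 3 / κ ^ 2 := by
  have ha0 : 0 < a := lt_of_lt_of_le hκ ha
  have hb0 : 0 < b := lt_of_lt_of_le hκ hb
  rcases le_total b a with h | h
  · -- a ≥ b
    have hL0 : 0 ≤ Real.log (a / b) :=
      Real.log_nonneg (by rw [le_div_iff₀ hb0]; linarith)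
    have hL : Real.log (a / b) ≤ (a - b) / b := by
      have h1 := Real.log_le_sub_one_of_pos (show (0:ℝ) < a / b by positivity)
      have : a / b - 1 = (a - b) / b := by field_simp
      linarith [h1, this.ge]
    have hsq : (Real.log (a / b)) ^ 2 ≤ ((a - b) / b) ^ 2 := by
      have : 0 ≤ (a - b) / b := div_nonneg (by linarith) hb0.le
      nlinarith
    have habs : |a - b| = a - b := abs_of_nonneg (by linarith)
    rw [habs]
    have key : a / b ^ 2 ≤ 1 / κ + (a - b) / κ ^ 2 := by
      rw [div_add_div _ _ (ne_of_gt hκ) (by positivity),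
        div_le_div_iff₀ (by positivity) (by positivity)]
      nlinarith [mul_nonneg (mul_nonneg hκ.le (mul_nonneg hκ.le hκ.le)) (sub_nonneg.2 hb),
        mul_nonneg (mul_nonneg (mul_nonneg hκ.le hκ.le) (sub_nonneg.2 hb)) (sub_nonneg.2 h),
        mul_nonneg (mul_nonneg (mul_nonneg hκ.le (sub_nonneg.2 hb)) (sub_nonneg.2 hb)) (sub_nonneg.2 h),
        mul_nonneg (mul_nonneg (mul_nonneg hκ.le hκ.le) (sub_nonneg.2 hb)) (sub_nonneg.2 hb),
        mul_nonneg (mul_nonneg (mul_nonneg hκ.le (sub_nonneg.2 hb)) (sub_nonneg.2 hb)) (sub_nonneg.2 hb)]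
    have e1 : a * ((a - b) / b) ^ 2 = (a - b) ^ 2 * (a / b ^ 2) := by
      field_simp
    have e2 : (a - b) ^ 2 / κ + (a - b) ^ 3 / κ ^ 2
        = (a - b) ^ 2 * (1 / κ + (a - b) / κ ^ 2) := by ring
    calc a * (Real.log (a / b)) ^ 2 ≤ a * ((a - b) / b) ^ 2 := by nlinarith
      _ = (a - b) ^ 2 * (a / b ^ 2) := e1
      _ ≤ (a - b) ^ 2 * (1 / κ + (a - b) / κ ^ 2) :=
          mul_le_mul_of_nonneg_left key (by positivity)
      _ = (a - b) ^ 2 / κ + (a - b) ^ 3 / κ ^ 2 := e2.symm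
  · -- a ≤ b
    have hlog : Real.log (a / b) = -Real.log (b / a) := by
      rw [← Real.log_inv]; congr 1; field_simp
    have hL0 : 0 ≤ Real.log (b / a) :=
      Real.log_nonneg (by rw [le_div_iff₀ ha0]; linarith)
    have hL : Real.log (b / a) ≤ (b - a) / a := by
      have h1 := Real.log_le_sub_one_of_pos (show (0:ℝ) < b / a by positivity)
      have : b / a - 1 = (b - a) / a := by field_simp
      linarith [h1, this.ge]
    have hsq : (Real.log (a / b)) ^ 2 ≤ ((b - a) / a) ^ 2 := by
      rw [hlog, neg_pow]
      have : 0 ≤ (b - a) / a := div_nonneg (by linarith) ha0.le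
      nlinarith
    have key : a * ((b - a) / a) ^ 2 ≤ (a - b) ^ 2 / κ := by
      have e : a * ((b - a) / a) ^ 2 = (a - b) ^ 2 / a := by
        field_simp; ring
      rw [e]
      apply div_le_div_of_nonneg_left (by positivity) hκ ha
    have h3 : 0 ≤ |a - b| ^ 3 / κ ^ 2 := by positivity
    nlinarith
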